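/- (Soundness of the sum-check protocol.) Let F be a finite field and let h be a polynomial in F[X_1,…,X_l] whose degree in each variable is at most d, and suppose Σ_{w ∈ {0,1}^l} h(w) ≠ 0. Let g'_1 be a univariate polynomial over F of degree at most d, and for each i with 2 ≤ i ≤ l let g'_i be an arbitrary function assigning to each tuple (r_1,…,r_{i−1}) ∈ F^{i−1} a univariate polynomial over F of degree at most d. Then the number of tuples r = (r_1,…,r_l) ∈ F^l satisfying all of the following is at most d·l·|F|^{l−1}: (i) g'_1(0) + g'_1(1) = 0; (ii) for every i with 2 ≤ i ≤ l, g'_i(r_1,…,r_{i−1})(0) + g'_i(r_1,…,r_{i−1})(1) = g'_{i−1}(r_1,…,r_{i−2})(r_{i−1}); and (iii) g'_l(r_1,…,r_{l−1})(r_l) = h(r_1,…,r_l). -/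

import Mathlib

open Polynomial


lemma eval_aeval' {F σ : Type*} [CommSemiring F] (x : F) (f : σ → Polynomial F)
    (p : MvPolynomial σ F) :
    (MvPolynomial.aeval f p).eval x = MvPolynomial.eval (fun s => (f s).eval x) p := by
  rw [MvPolynomial.aeval_def, MvPolynomial.polynomial_eval_eval₂]
  have : ((Polynomial.evalRingHom x).comp (algebraMap F (Polynomial F))) = RingHom.id F := by
    ext a; simp
  rw [this]
  rfl

lemma degree_aeval_le {F : Type*} [CommRing F] [Nontrivial F] {n : ℕ} (i : Fin n)
    (f : Fin n → Polynomial F)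
    (hf : ∀ j, j ≠ i → (f j).degree ≤ 0) (hfi : f i = Polynomial.X) (d : ℕ)
    (p : MvPolynomial (Fin n) F) (hp : p.degreeOf i ≤ d) :
    (MvPolynomial.aeval f p).degree ≤ (d : WithBot ℕ) := by
  classical
  conv_lhs => rw [p.as_sum]
  rw [map_sum]
  refine (Polynomial.degree_sum_le _ _).trans ?_
  refine Finset.sup_le fun s hs => ?_
  rw [MvPolynomial.aeval_monomial]
  refine (Polynomial.degree_mul_le _ _).trans ?_
  have h1 : (algebraMap F (Polynomial F) (MvPolynomial.coeff s p)).degree ≤ 0 :=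
    Polynomial.degree_C_le
  have h2 : ((s.prod fun j e => f j ^ e) : Polynomial F).degree ≤ ((s i : ℕ) : WithBot ℕ) := by
    rw [Finsupp.prod]
    refine (Polynomial.degree_prod_le _ _).trans ?_
    have hb : ∀ j ∈ s.support, ((f j ^ s j : Polynomial F)).degree
        ≤ (if j = i then ((s i : ℕ) : WithBot ℕ) else 0) := by
      intro j hj
      by_cases hji : j = i
      · subst hji
        rw [hfi, Polynomial.degree_X_pow]
        simp
      · simp only [hji, if_false]
        have hc := Polynomial.eq_C_of_degree_le_zero (hf j hji)
        rw [hc, ← Polynomial.C_pow]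
        exact Polynomial.degree_C_le
    refine (Finset.sum_le_sum hb).trans ?_
    rw [Finset.sum_ite_eq' s.support i (fun _ => ((s i : ℕ) : WithBot ℕ))]
    split_ifs with hmem
    · exact le_refl _
    · exact WithBot.coe_le_coe.mpr (Nat.zero_le _) |>.trans' (by simp)
  have h3 : (s i : ℕ) ≤ d := by
    refine le_trans ?_ hp
    rw [MvPolynomial.degreeOf_eq_sup]
    exact Finset.le_sup (f := fun m => m i) hs
  calc _ ≤ 0 + ((s i : ℕ) : WithBot ℕ) := add_le_add h1 h2
    _ = ((s i : ℕ) : WithBot ℕ) := zero_add _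
    _ ≤ (d : WithBot ℕ) := WithBot.coe_le_coe.mpr h3

/-- Boolean to field value. -/
def scBV {F : Type*} [Zero F] [One F] (b : Bool) : F := if b then 1 else 0

/-- Combine a prefix, a middle value, and a tail into a full assignment. -/
def scPad {α : Type*} (l i : ℕ) (ρ : Fin i → α) (x : α) (w : Fin (l - 1 - i) → α) :
    Fin l → α := fun j =>
  if hj : (j : ℕ) < i then ρ ⟨j, hj⟩
  else if hj2 : (j : ℕ) = i then x
  else w ⟨(j : ℕ) - (i + 1), by have := j.isLt; omega⟩

/-- The honest prover's polynomial for round `i`. -/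
noncomputable def scG {F : Type*} [Field F] (l : ℕ) (h : MvPolynomial (Fin l) F) (i : ℕ)
    (ρ : Fin i → F) : Polynomial F :=
  ∑ w : Fin (l - 1 - i) → Bool,
    MvPolynomial.aeval
      (scPad l i (fun j => Polynomial.C (ρ j)) Polynomial.X fun k => Polynomial.C (scBV (w k))) h

lemma scG_eval {F : Type*} [Field F] (l : ℕ) (h : MvPolynomial (Fin l) F) (i : ℕ)
    (ρ : Fin i → F) (x : F) :
    (scG l h i ρ).eval x
      = ∑ w : Fin (l - 1 - i) → Bool,
          MvPolynomial.eval (scPad l i ρ x fun k => scBV (w k)) h := by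
  rw [scG, Polynomial.eval_finset_sum]
  refine Finset.sum_congr rfl fun w _ => ?_
  rw [eval_aeval']
  have hfun : (fun s => Polynomial.eval x
      (scPad l i (fun j => Polynomial.C (ρ j)) Polynomial.X (fun k => Polynomial.C (scBV (w k))) s))
      = scPad l i ρ x (fun k => scBV (w k)) := by
    funext j
    simp only [scPad]
    split_ifs <;> simp
  rw [hfun]

lemma scG_degree {F : Type*} [Field F] (l : ℕ) (h : MvPolynomial (Fin l) F) (d : ℕ)
    (hdeg : ∀ j : Fin l, h.degreeOf j ≤ d) (i : ℕ) (hi : i < l) (ρ : Fin i → F) :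
    (scG l h i ρ).degree ≤ (d : WithBot ℕ) := by
  rw [scG]
  refine (Polynomial.degree_sum_le _ _).trans (Finset.sup_le fun w _ => ?_)
  refine degree_aeval_le ⟨i, hi⟩ _ ?_ ?_ d h (hdeg _)
  · intro j hj
    simp only [scPad]
    have : (j : ℕ) ≠ i := fun hc => hj (Fin.ext hc)
    by_cases h1 : (j : ℕ) < i
    · rw [dif_pos h1]; exact Polynomial.degree_C_le
    · rw [dif_neg h1, dif_neg this]; exact Polynomial.degree_C_le
  · simp [scPad]

def scExt (n m : ℕ) (hnm : n = m + 1) (b : Bool) (w : Fin m → Bool) : Fin n → Bool :=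
  fun j => if hj : (j : ℕ) = 0 then b else w ⟨(j : ℕ) - 1, by have := j.isLt; omega⟩

/-- Splitting a sum over the Boolean cube along the first coordinate. -/
lemma sc_sum_split {M : Type*} [AddCommMonoid M] (n m : ℕ) (hnm : n = m + 1)
    (f : (Fin n → Bool) → M) :
    ∑ w : Fin n → Bool, f w
      = (∑ w : Fin m → Bool, f (scExt n m hnm false w))
        + ∑ w : Fin m → Bool, f (scExt n m hnm true w) := by
  subst hnm
  let e : Bool × (Fin m → Bool) ≃ (Fin (m + 1) → Bool) :=
    { toFun := fun p => scExt (m + 1) m rfl p.1 p.2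
      invFun := fun w => (w ⟨0, Nat.succ_pos m⟩, fun k => w ⟨(k : ℕ) + 1, by
        have := k.isLt; omega⟩)
      left_inv := by
        intro p
        refine Prod.ext ?_ ?_
        · simp [scExt]
        · funext k
          simp [scExt]
      right_inv := by
        intro w
        funext j
        by_cases hj : (j : ℕ) = 0
        · simp [scExt, hj]
          congr 1
          exact Fin.ext hj.symm
        · simp [scExt, hj]
          congr 1
          exact Fin.ext (by have := j.isLt; simp; omega) }
  rw [← Equiv.sum_comp e f, Fintype.sum_prod_type, Fintype.sum_bool]
  rw [add_comm]
  rfl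


lemma scPad_lt {α : Type*} (l i : ℕ) (ρ : Fin i → α) (x : α) (w : Fin (l - 1 - i) → α)
    (j : Fin l) (hj : (j : ℕ) < i) : scPad l i ρ x w j = ρ ⟨j, hj⟩ := by
  simp only [scPad]; rw [dif_pos hj]

lemma scPad_mid {α : Type*} (l i : ℕ) (ρ : Fin i → α) (x : α) (w : Fin (l - 1 - i) → α)
    (j : Fin l) (hj : (j : ℕ) = i) : scPad l i ρ x w j = x := by
  simp only [scPad]; rw [dif_neg (by omega), dif_pos hj]

lemma scPad_gt {α : Type*} (l i : ℕ) (ρ : Fin i → α) (x : α) (w : Fin (l - 1 - i) → α)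
    (j : Fin l) (hj : i < (j : ℕ)) :
    scPad l i ρ x w j = w ⟨(j : ℕ) - (i + 1), by have := j.isLt; omega⟩ := by
  simp only [scPad]; rw [dif_neg (by omega), dif_neg (by omega)]

lemma scExt_zero (n m : ℕ) (hnm : n = m + 1) (b : Bool) (w : Fin m → Bool) (k : Fin n)
    (hk : (k : ℕ) = 0) : scExt n m hnm b w k = b := by
  simp only [scExt]; rw [dif_pos hk]

lemma scExt_pos (n m : ℕ) (hnm : n = m + 1) (b : Bool) (w : Fin m → Bool) (k : Fin n)
    (hk : 0 < (k : ℕ)) :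
    scExt n m hnm b w k = w ⟨(k : ℕ) - 1, by have := k.isLt; omega⟩ := by
  simp only [scExt]; rw [dif_neg (by omega)]

lemma scPad_split_eq {F : Type*} [Field F] (l i : ℕ) (hi : i + 1 < l) (r : Fin l → F)
    (b : Bool) (w : Fin (l - 1 - (i + 1)) → Bool) :
    scPad l i (fun j => r (Fin.castLE (Nat.lt_of_succ_lt hi).le j)) (r ⟨i, Nat.lt_of_succ_lt hi⟩)
        (fun k => scBV (scExt (l - 1 - i) (l - 1 - (i + 1)) (by omega) b w k))
      = scPad l (i + 1) (fun j => r (Fin.castLE hi.le j)) (scBV b)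
        (fun k => scBV (w k)) := by
  funext j
  rcases Nat.lt_trichotomy (j : ℕ) i with hj | hj | hj
  · rw [scPad_lt _ _ _ _ _ _ hj, scPad_lt _ _ _ _ _ _ (by omega : (j : ℕ) < i + 1)]
    rfl
  · rw [scPad_mid _ _ _ _ _ _ hj, scPad_lt _ _ _ _ _ _ (by omega : (j : ℕ) < i + 1)]
    exact congrArg r (Fin.ext hj.symm)
  · rcases Nat.eq_or_lt_of_le hj with hj2 | hj2
    · rw [scPad_gt _ _ _ _ _ _ hj, scPad_mid _ _ _ _ _ _ (by omega : (j : ℕ) = i + 1)]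
      rw [scExt_zero _ _ _ _ _ _ (show (j : ℕ) - (i + 1) = 0 by omega)]
    · rw [scPad_gt _ _ _ _ _ _ hj, scPad_gt _ _ _ _ _ _ (by omega : i + 1 < (j : ℕ))]
      rw [scExt_pos _ _ _ _ _ _ (show 0 < (j : ℕ) - (i + 1) by omega)]
      exact congrArg (fun k => scBV (w k))
        (Fin.ext (show (j : ℕ) - (i + 1) - 1 = (j : ℕ) - (i + 1 + 1) by omega))

lemma scFirst {F : Type*} [Field F] (l : ℕ) (hl : 0 < l) (h : MvPolynomial (Fin l) F)
    (ρ : Fin 0 → F) :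
    (scG l h 0 ρ).eval 0 + (scG l h 0 ρ).eval 1
      = ∑ w : Fin l → Bool, MvPolynomial.eval (fun i => if w i then (1 : F) else 0) h := by
  rw [scG_eval, scG_eval,
    sc_sum_split l (l - 1) (by omega)
      (fun w => MvPolynomial.eval (fun i => if w i then (1 : F) else 0) h)]
  congr 1
  · refine Finset.sum_congr rfl fun w _ => ?_
    refine congrArg (fun v => MvPolynomial.eval v h) ?_
    funext j
    by_cases hj : (j : ℕ) = 0
    · rw [scPad_mid _ _ _ _ _ _ hj, scExt_zero _ _ _ _ _ _ hj]
      simp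
    · rw [scPad_gt _ _ _ _ _ _ (by omega), scExt_pos _ _ _ _ _ _ (by omega)]
      rfl
  · refine Finset.sum_congr rfl fun w _ => ?_
    refine congrArg (fun v => MvPolynomial.eval v h) ?_
    funext j
    by_cases hj : (j : ℕ) = 0
    · rw [scPad_mid _ _ _ _ _ _ hj, scExt_zero _ _ _ _ _ _ hj]
      simp
    · rw [scPad_gt _ _ _ _ _ _ (by omega), scExt_pos _ _ _ _ _ _ (by omega)]
      rfl

lemma scStep {F : Type*} [Field F] (l : ℕ) (h : MvPolynomial (Fin l) F) (i : ℕ)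
    (hi : i + 1 < l) (r : Fin l → F) :
    (scG l h i (fun j => r (Fin.castLE (Nat.lt_of_succ_lt hi).le j))).eval (r ⟨i, Nat.lt_of_succ_lt hi⟩)
      = (scG l h (i + 1) (fun j => r (Fin.castLE hi.le j))).eval 0
        + (scG l h (i + 1) (fun j => r (Fin.castLE hi.le j))).eval 1 := by
  rw [scG_eval, scG_eval, scG_eval,
    sc_sum_split (l - 1 - i) (l - 1 - (i + 1)) (by omega)]
  congr 1
  · refine Finset.sum_congr rfl fun w _ => ?_
    refine congrArg (fun v => MvPolynomial.eval v h) ?_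
    rw [show ((0 : F) = scBV false) by simp [scBV]]
    exact scPad_split_eq l i hi r false w
  · refine Finset.sum_congr rfl fun w _ => ?_
    refine congrArg (fun v => MvPolynomial.eval v h) ?_
    rw [show ((1 : F) = scBV true) by simp [scBV]]
    exact scPad_split_eq l i hi r true w

lemma scLast {F : Type*} [Field F] (l : ℕ) (hl : 0 < l) (h : MvPolynomial (Fin l) F)
    (r : Fin l → F) :
    (scG l h (l - 1) (fun j => r (Fin.castLE (Nat.sub_le l 1) j))).eval (r ⟨l - 1, Nat.sub_lt hl Nat.one_pos⟩)
      = MvPolynomial.eval r h := by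
  rw [scG_eval]
  have hconst : ∀ w : Fin (l - 1 - (l - 1)) → Bool,
      MvPolynomial.eval
        (scPad l (l - 1) (fun j => r (Fin.castLE (by omega) j)) (r ⟨l - 1, by omega⟩)
          fun k => scBV (w k)) h = MvPolynomial.eval r h := by
    intro w
    refine congrArg (fun v => MvPolynomial.eval v h) ?_
    funext j
    rcases Nat.lt_trichotomy (j : ℕ) (l - 1) with hj | hj | hj
    · rw [scPad_lt _ _ _ _ _ _ hj]
      rfl
    · rw [scPad_mid _ _ _ _ _ _ hj]
      exact congrArg r (Fin.ext hj.symm)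
    · exact absurd j.isLt (by omega)
  rw [Finset.sum_congr rfl fun w _ => hconst w, Finset.sum_const, Finset.card_univ]
  have : Fintype.card (Fin (l - 1 - (l - 1)) → Bool) = 1 := by
    simp [Nat.sub_self]
  rw [this, one_smul]


lemma scCount {F : Type*} [Field F] [Fintype F] (l d i : ℕ) (hi : i < l)
    (q G : (Fin i → F) → Polynomial F)
    (hq : ∀ ρ, (q ρ).degree ≤ (d : ℕ)) (hG : ∀ ρ, (G ρ).degree ≤ (d : ℕ)) :
    Nat.card {r : Fin l → F //
      q (fun j => r (Fin.castLE hi.le j)) ≠ G (fun j => r (Fin.castLE hi.le j)) ∧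
      (q (fun j => r (Fin.castLE hi.le j))).eval (r ⟨i, hi⟩)
        = (G (fun j => r (Fin.castLE hi.le j))).eval (r ⟨i, hi⟩)}
      ≤ d * Fintype.card F ^ (l - 1) := by
  classical
  rw [Nat.card_eq_fintype_card, Fintype.card_subtype]
  have hi1 : i + 1 ≤ l := hi
  set Q : (Fin (i + 1) → F) → Prop := fun a =>
      q (fun j => a (Fin.castLE (Nat.le_succ i) j))
          ≠ G (fun j => a (Fin.castLE (Nat.le_succ i) j)) ∧
      (q (fun j => a (Fin.castLE (Nat.le_succ i) j))).eval (a ⟨i, Nat.lt_succ_self i⟩)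
        = (G (fun j => a (Fin.castLE (Nat.le_succ i) j))).eval (a ⟨i, Nat.lt_succ_self i⟩)
    with hQdef
  -- Step A: count on `Fin (i+1) → F`
  have stepA : (Finset.univ.filter Q).card ≤ d * Fintype.card F ^ i := by
    have key := Finset.card_le_mul_card_image
      (f := fun s : Fin (i + 1) → F => fun j : Fin i => s (Fin.castLE (Nat.le_succ i) j))
      (Finset.univ.filter Q) d ?_
    · refine key.trans (Nat.mul_le_mul_left d ?_)
      refine (Finset.card_le_univ _).trans ?_
      simp [Fintype.card_fun]
    · intro a _
      set p : Polynomial F := q a - G a with hp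
      have hdp : p.natDegree ≤ d := by
        refine Polynomial.natDegree_le_iff_degree_le.mpr ?_
        exact (Polynomial.degree_sub_le _ _).trans (max_le (hq a) (hG a))
      refine (Finset.card_le_card_of_injOn (fun s => s ⟨i, Nat.lt_succ_self i⟩)
        (fun s hs => ?_) (fun s hs t ht hst => ?_)).trans
        ((Multiset.toFinset_card_le _).trans ((Polynomial.card_roots' p).trans hdp))
      · simp only [Finset.mem_coe, Finset.mem_filter, Finset.mem_univ, true_and, hQdef] at hs
        obtain ⟨⟨hne, heq⟩, hres⟩ := hs
        rw [hres] at hne heq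
        have hp0 : p ≠ 0 := sub_ne_zero.mpr hne
        rw [Finset.mem_coe, Multiset.mem_toFinset, Polynomial.mem_roots hp0]
        simp only [Polynomial.IsRoot, hp, Polynomial.eval_sub]
        exact sub_eq_zero.mpr heq
      · simp only [Finset.mem_coe, Finset.mem_filter] at hs ht
        funext j
        rcases Nat.lt_or_ge (j : ℕ) i with hj | hj
        · have := congrFun (hs.2.trans ht.2.symm) ⟨j, hj⟩
          have hjj : (Fin.castLE (Nat.le_succ i) (⟨j, hj⟩ : Fin i)) = j := Fin.ext rfl
          rwa [hjj] at this
        · have hj' : j = ⟨i, Nat.lt_succ_self i⟩ := Fin.ext (by have := j.isLt; simp; omega)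
          rw [hj']
          exact hst
  -- Step B: lift to `Fin l → F`
  have hfib2 : ∀ a ∈ (Finset.univ.filter fun r : Fin l → F =>
      q (fun j => r (Fin.castLE hi.le j)) ≠ G (fun j => r (Fin.castLE hi.le j)) ∧
      (q (fun j => r (Fin.castLE hi.le j))).eval (r ⟨i, hi⟩)
        = (G (fun j => r (Fin.castLE hi.le j))).eval (r ⟨i, hi⟩)).image
      (fun r : Fin l → F => fun j : Fin (i + 1) => r (Fin.castLE hi1 j)),
      ((Finset.univ.filter fun r : Fin l → F =>
        q (fun j => r (Fin.castLE hi.le j)) ≠ G (fun j => r (Fin.castLE hi.le j)) ∧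
        (q (fun j => r (Fin.castLE hi.le j))).eval (r ⟨i, hi⟩)
          = (G (fun j => r (Fin.castLE hi.le j))).eval (r ⟨i, hi⟩)).filter
        (fun r => (fun j : Fin (i + 1) => r (Fin.castLE hi1 j)) = a)).card
        ≤ Fintype.card F ^ (l - (i + 1)) := by
    intro a _
    refine (Finset.card_le_card_of_injOn
      (fun r => fun k : Fin (l - (i + 1)) => r ⟨i + 1 + (k : ℕ), by have := k.isLt; omega⟩)
      (fun r _ => Finset.mem_univ _) (fun r hr t ht hrt => ?_)).trans ?_
    · simp only [Finset.mem_coe, Finset.mem_filter] at hr ht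
      funext j
      rcases Nat.lt_or_ge (j : ℕ) (i + 1) with hj | hj
      · have := congrFun (hr.2.trans ht.2.symm) ⟨j, hj⟩
        have hjj : (Fin.castLE hi1 (⟨j, hj⟩ : Fin (i + 1))) = j := Fin.ext rfl
        rwa [hjj] at this
      · have := congrFun hrt ⟨(j : ℕ) - (i + 1), by have := j.isLt; omega⟩
        simp only at this
        have hjj : (⟨i + 1 + ((j : ℕ) - (i + 1)), by have := j.isLt; omega⟩ : Fin l) = j :=
          Fin.ext (by simp; omega)
        rwa [hjj] at this
    · refine le_of_eq ?_
      rw [Finset.card_univ]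
      simp [Fintype.card_fun]
  have key2 := Finset.card_le_mul_card_image
    (f := fun r : Fin l → F => fun j : Fin (i + 1) => r (Fin.castLE hi1 j))
    (Finset.univ.filter fun r : Fin l → F =>
      q (fun j => r (Fin.castLE hi.le j)) ≠ G (fun j => r (Fin.castLE hi.le j)) ∧
      (q (fun j => r (Fin.castLE hi.le j))).eval (r ⟨i, hi⟩)
        = (G (fun j => r (Fin.castLE hi.le j))).eval (r ⟨i, hi⟩))
    (Fintype.card F ^ (l - (i + 1))) hfib2
  have himg : ((Finset.univ.filter fun r : Fin l → F =>
      q (fun j => r (Fin.castLE hi.le j)) ≠ G (fun j => r (Fin.castLE hi.le j)) ∧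
      (q (fun j => r (Fin.castLE hi.le j))).eval (r ⟨i, hi⟩)
        = (G (fun j => r (Fin.castLE hi.le j))).eval (r ⟨i, hi⟩)).image
      (fun r : Fin l → F => fun j : Fin (i + 1) => r (Fin.castLE hi1 j)))
      ⊆ Finset.univ.filter Q := by
    intro a ha
    rw [Finset.mem_image] at ha
    obtain ⟨r, hr, hra⟩ := ha
    rw [Finset.mem_filter] at hr ⊢
    exact ⟨Finset.mem_univ _, hra ▸ hr.2⟩
  refine key2.trans ?_
  refine (Nat.mul_le_mul_left _ ((Finset.card_le_card himg).trans stepA)).trans (le_of_eq ?_)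
  have hx : Fintype.card F ^ (l - (i + 1)) * (d * Fintype.card F ^ i)
      = d * (Fintype.card F ^ i * Fintype.card F ^ (l - (i + 1))) := by ring
  have hy : i + (l - (i + 1)) = l - 1 := by clear * - hi; omega
  rw [hx, ← pow_add, hy]

/-- **Soundness of the sum-check protocol.**
Let `h` be a polynomial in `l ≥ 1` variables over a finite field `F` of degree at most `d` in
each variable whose sum over the Boolean cube is nonzero. A (possibly dishonest, adaptive)
prover supplies, for each round `i` (here indexed from `0` to `l − 1`, so `g' i` plays the role
of `g'_{i+1}` and depends on the previously chosen elements `r_1,…,r_i`), a univariate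
polynomial of degree at most `d`. Then the number of tuples `r ∈ F^l` passing the first
consistency test `g'_1(0) + g'_1(1) = 0`, the remaining consistency tests
`g'_{i+1}(0) + g'_{i+1}(1) = g'_i(r_i)`, and the final test `g'_l(r_l) = h(r)` is at most
`d·l·|F|^{l−1}`. -/
theorem sumcheck_soundness (F : Type*) [Field F] [Fintype F] (l d : ℕ) (hl : 0 < l)
    (h : MvPolynomial (Fin l) F)
    (hdeg : ∀ i : Fin l, h.degreeOf i ≤ d)
    (hsum : ∑ w : Fin l → Bool,
        MvPolynomial.eval (fun i => if w i then (1 : F) else 0) h ≠ 0)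
    (g' : (i : ℕ) → (Fin i → F) → Polynomial F)
    (hg' : ∀ i : ℕ, i < l → ∀ ρ : Fin i → F, (g' i ρ).degree ≤ (d : ℕ)) :
    Nat.card {r : Fin l → F //
      ((g' 0 (fun j => r (Fin.castLE (by omega) j))).eval 0
        + (g' 0 (fun j => r (Fin.castLE (by omega) j))).eval 1 = 0) ∧
      (∀ i : ℕ, ∀ hi : i + 1 < l,
        (g' (i + 1) (fun j => r (Fin.castLE (by omega) j))).eval 0
          + (g' (i + 1) (fun j => r (Fin.castLE (by omega) j))).eval 1
          = (g' i (fun j => r (Fin.castLE (by omega) j))).eval (r ⟨i, by omega⟩)) ∧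
      ((g' (l - 1) (fun j => r (Fin.castLE (by omega) j))).eval (r ⟨l - 1, by omega⟩)
        = MvPolynomial.eval r h)}
      ≤ d * l * Fintype.card F ^ (l - 1) := by
  classical
  -- the "bad event" at round `i`
  have cover : ∀ r : Fin l → F,
      (((g' 0 (fun j => r (Fin.castLE (by omega) j))).eval 0
        + (g' 0 (fun j => r (Fin.castLE (by omega) j))).eval 1 = 0) ∧
      (∀ i : ℕ, ∀ hi : i + 1 < l,
        (g' (i + 1) (fun j => r (Fin.castLE (by omega) j))).eval 0
          + (g' (i + 1) (fun j => r (Fin.castLE (by omega) j))).eval 1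
          = (g' i (fun j => r (Fin.castLE (by omega) j))).eval (r ⟨i, by omega⟩)) ∧
      ((g' (l - 1) (fun j => r (Fin.castLE (by omega) j))).eval (r ⟨l - 1, by omega⟩)
        = MvPolynomial.eval r h)) →
      ∃ i, ∃ hi : i < l,
        (g' i (fun j => r (Fin.castLE hi.le j)) ≠ scG l h i (fun j => r (Fin.castLE hi.le j)) ∧
        (g' i (fun j => r (Fin.castLE hi.le j))).eval (r ⟨i, hi⟩)
          = (scG l h i (fun j => r (Fin.castLE hi.le j))).eval (r ⟨i, hi⟩)) := by
    intro r ⟨H1, H2, H3⟩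
    by_contra hno
    push_neg at hno
    have key : ∀ i, ∀ hi : i < l,
        (g' i (fun j => r (Fin.castLE hi.le j))).eval (r ⟨i, hi⟩)
          ≠ (scG l h i (fun j => r (Fin.castLE hi.le j))).eval (r ⟨i, hi⟩) := by
      intro i
      induction i with
      | zero =>
        intro hi
        have hne : g' 0 (fun j => r (Fin.castLE hi.le j))
            ≠ scG l h 0 (fun j => r (Fin.castLE hi.le j)) := by
          intro he
          apply hsum
          rw [← scFirst l hl h (fun j => r (Fin.castLE hi.le j)), ← he]
          exact H1
        exact fun he => (hno 0 hi hne) he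
      | succ i ih =>
        intro hi
        have hprev := ih (by omega)
        have hne : g' (i + 1) (fun j => r (Fin.castLE hi.le j))
            ≠ scG l h (i + 1) (fun j => r (Fin.castLE hi.le j)) := by
          intro he
          apply hprev
          have e1 := H2 i hi
          have e2 := scStep l h i hi r
          rw [he] at e1
          rw [e1] at e2
          exact e2.symm
        exact fun he => (hno (i + 1) hi hne) he
    exact key (l - 1) (by omega) (H3.trans (scLast l hl h r).symm)
  rw [Nat.card_eq_fintype_card, Fintype.card_subtype]
  have hsubset : (Finset.univ.filter fun r : Fin l → F =>
      (((g' 0 (fun j => r (Fin.castLE (by omega) j))).eval 0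
        + (g' 0 (fun j => r (Fin.castLE (by omega) j))).eval 1 = 0) ∧
      (∀ i : ℕ, ∀ hi : i + 1 < l,
        (g' (i + 1) (fun j => r (Fin.castLE (by omega) j))).eval 0
          + (g' (i + 1) (fun j => r (Fin.castLE (by omega) j))).eval 1
          = (g' i (fun j => r (Fin.castLE (by omega) j))).eval (r ⟨i, by omega⟩)) ∧
      ((g' (l - 1) (fun j => r (Fin.castLE (by omega) j))).eval (r ⟨l - 1, by omega⟩)
        = MvPolynomial.eval r h)))
      ⊆ (Finset.range l).biUnion (fun i =>
          if hi : i < l then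
            Finset.univ.filter (fun r : Fin l → F =>
              g' i (fun j => r (Fin.castLE hi.le j))
                  ≠ scG l h i (fun j => r (Fin.castLE hi.le j)) ∧
              (g' i (fun j => r (Fin.castLE hi.le j))).eval (r ⟨i, hi⟩)
                = (scG l h i (fun j => r (Fin.castLE hi.le j))).eval (r ⟨i, hi⟩))
          else ∅) := by
    intro r hr
    rw [Finset.mem_filter] at hr
    obtain ⟨i, hi, hbad⟩ := cover r hr.2
    rw [Finset.mem_biUnion]
    refine ⟨i, Finset.mem_range.mpr hi, ?_⟩
    rw [dif_pos hi, Finset.mem_filter]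
    exact ⟨Finset.mem_univ _, hbad⟩
  refine ((Finset.card_le_card hsubset).trans (Finset.card_biUnion_le)).trans ?_
  have hbound : ∀ i ∈ Finset.range l,
      (if hi : i < l then
        Finset.univ.filter (fun r : Fin l → F =>
          g' i (fun j => r (Fin.castLE hi.le j))
              ≠ scG l h i (fun j => r (Fin.castLE hi.le j)) ∧
          (g' i (fun j => r (Fin.castLE hi.le j))).eval (r ⟨i, hi⟩)
            = (scG l h i (fun j => r (Fin.castLE hi.le j))).eval (r ⟨i, hi⟩))
      else ∅).card ≤ d * Fintype.card F ^ (l - 1) := by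
    intro i hil
    have hi : i < l := Finset.mem_range.mp hil
    rw [dif_pos hi]
    have := scCount l d i hi (g' i) (scG l h i) (hg' i hi) (scG_degree l h d hdeg i hi)
    rw [Nat.card_eq_fintype_card, Fintype.card_subtype] at this
    exact this
  refine (Finset.sum_le_sum hbound).trans ?_
  rw [Finset.sum_const, Finset.card_range, smul_eq_mul]
  rw [show l * (d * Fintype.card F ^ (l - 1)) = d * l * Fintype.card F ^ (l - 1) by ring]
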